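/- Let φ, φ' : S → ℝ^d be two representations, F = {x ↦ softmax(Wx) : W ∈ ℝ^{K×d}, ‖W‖_F ≤ 1}, G ⊆ {g : S → ℝ, ‖g‖_∞ ≤ 1}, and x = {(s_j,a_j,s̃_j,s̄_j)}_{j=1}^n a dataset. Define m̂_x(φ) = min_{f∈F} max_{g∈G} (1/n) Σ_j [K·f(φ(s_j))_{a_j}·g(s̃_j) − g(s̄_j)]. Then (m̂_x(φ) − m̂_x(φ'))² ≤ (4K²/n)·Σ_{j=1}^n ‖φ(s_j) − φ'(s_j)‖², where ‖·‖ is the Euclidean norm on ℝ^d. -/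

import Mathlib

noncomputable section

open MeasureTheory

/-- softmax on `ℝ^K`. -/
def softmax {K : ℕ} (v : Fin K → ℝ) (a : Fin K) : ℝ :=
  Real.exp (v a) / ∑ j, Real.exp (v j)

/-- Frobenius norm of a `K × d` real matrix. -/
def frob {K d : ℕ} (W : Matrix (Fin K) (Fin d) ℝ) : ℝ :=
  Real.sqrt (∑ i, ∑ j, (W i j) ^ 2)

/-- `m̂_x(ψ) = min_{f∈F} max_{g∈G} (1/n) ∑_j [K f(ψ(s_j))_{a_j} g(s̃_j) − g(s̄_j)]`. -/
def mhat {S : Type} {d K n : ℕ} (G : Set (S → ℝ)) (s st sb : Fin n → S)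
    (a : Fin n → Fin K) (ψ : S → EuclideanSpace ℝ (Fin d)) : ℝ :=
  ⨅ W : {W : Matrix (Fin K) (Fin d) ℝ // frob W ≤ 1},
    ⨆ g : G, (1 / n : ℝ) * ∑ j,
      ((K : ℝ) * softmax (W.1.mulVec fun k => ψ (s j) k) (a j) * (g : S → ℝ) (st j)
        - (g : S → ℝ) (sb j))

lemma softmax_nonneg {K : ℕ} (v : Fin K → ℝ) (a : Fin K) : 0 ≤ softmax v a := by
  unfold softmax; positivity

lemma softmax_le_one {K : ℕ} (v : Fin K → ℝ) (a : Fin K) : softmax v a ≤ 1 := by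
  unfold softmax
  have hs : 0 < ∑ j, Real.exp (v j) :=
    Finset.sum_pos (fun j _ => Real.exp_pos _) ⟨a, Finset.mem_univ a⟩
  rw [div_le_one hs]
  exact Finset.single_le_sum (fun j _ => (Real.exp_pos _).le) (Finset.mem_univ a)

lemma softmax_sub_le {K : ℕ} (v v' : Fin K → ℝ) (a : Fin K) (δ : ℝ) (hδ : 0 ≤ δ)
    (h : ∀ j, |v j - v' j| ≤ δ) : softmax v a - softmax v' a ≤ 2 * δ := by
  have hB : 0 < ∑ j, Real.exp (v j) :=
    Finset.sum_pos (fun j _ => Real.exp_pos _) ⟨a, Finset.mem_univ a⟩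
  have hB' : 0 < ∑ j, Real.exp (v' j) :=
    Finset.sum_pos (fun j _ => Real.exp_pos _) ⟨a, Finset.mem_univ a⟩
  have key : Real.exp (-(2*δ)) * softmax v a ≤ softmax v' a := by
    unfold softmax
    have h1 : Real.exp (v a - δ) ≤ Real.exp (v' a) := by
      apply Real.exp_le_exp.2
      have := abs_le.1 (h a); linarith [this.1, this.2]
    have h2 : ∑ j, Real.exp (v' j) ≤ ∑ j, Real.exp (v j + δ) := by
      apply Finset.sum_le_sum
      intro j _
      apply Real.exp_le_exp.2
      have := abs_le.1 (h j); linarith [this.1, this.2]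
    have heq : Real.exp (-(2*δ)) * (Real.exp (v a) / ∑ j, Real.exp (v j))
        = Real.exp (v a - δ) / ∑ j, Real.exp (v j + δ) := by
      have e1 : Real.exp (v a - δ) = Real.exp (-(2*δ)) * Real.exp (v a) * Real.exp δ := by
        rw [← Real.exp_add, ← Real.exp_add]; ring_nf
      simp only [Real.exp_add, ← Finset.sum_mul]
      rw [e1, mul_div_mul_right _ _ (Real.exp_ne_zero δ), mul_div_assoc]
    rw [heq]
    exact div_le_div₀ (Real.exp_pos _).le h1 hB' h2
  have hp1 := softmax_le_one v a
  have hp0 := softmax_nonneg v a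
  have hexp : 1 - 2*δ ≤ Real.exp (-(2*δ)) := by
    have := Real.add_one_le_exp (-(2*δ)); linarith
  nlinarith [Real.exp_pos (-(2*δ))]

lemma softmax_abs_sub_le {K : ℕ} (v v' : Fin K → ℝ) (a : Fin K) (δ : ℝ) (hδ : 0 ≤ δ)
    (h : ∀ j, |v j - v' j| ≤ δ) : |softmax v a - softmax v' a| ≤ 2 * δ := by
  rw [abs_le]
  constructor
  · have := softmax_sub_le v' v a δ hδ (fun j => by rw [abs_sub_comm]; exact h j); linarith
  · exact softmax_sub_le v v' a δ hδ h

lemma mulVec_coord_lip {K d : ℕ} (W : Matrix (Fin K) (Fin d) ℝ) (hW : frob W ≤ 1)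
    (u u' : EuclideanSpace ℝ (Fin d)) (i : Fin K) :
    |W.mulVec (fun k => u k) i - W.mulVec (fun k => u' k) i| ≤ ‖u - u'‖ := by
  have hmv : W.mulVec (fun k => u k) i - W.mulVec (fun k => u' k) i
      = ∑ j, W i j * (u j - u' j) := by
    simp [Matrix.mulVec, dotProduct, ← Finset.sum_sub_distrib, mul_sub]
  rw [hmv]
  have hnorm : ‖u - u'‖ = Real.sqrt (∑ j, (u j - u' j) ^ 2) := by
    rw [EuclideanSpace.norm_eq]
    congr 1
    refine Finset.sum_congr rfl fun j _ => ?_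
    rw [PiLp.sub_apply]
    simp [Real.norm_eq_abs, sq_abs]
  have hcs : (∑ j, W i j * (u j - u' j)) ^ 2
      ≤ (∑ j, (W i j) ^ 2) * ∑ j, (u j - u' j) ^ 2 :=
    Finset.sum_mul_sq_le_sq_mul_sq _ _ _
  have h1 : |∑ j, W i j * (u j - u' j)|
      ≤ Real.sqrt ((∑ j, (W i j) ^ 2) * ∑ j, (u j - u' j) ^ 2) := by
    rw [← Real.sqrt_sq_eq_abs]
    exact Real.sqrt_le_sqrt hcs
  have h2 : Real.sqrt ((∑ j, (W i j) ^ 2) * ∑ j, (u j - u' j) ^ 2)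
      = Real.sqrt (∑ j, (W i j) ^ 2) * Real.sqrt (∑ j, (u j - u' j) ^ 2) :=
    Real.sqrt_mul (by positivity) _
  have h3 : Real.sqrt (∑ j, (W i j) ^ 2) ≤ 1 := by
    refine le_trans ?_ hW
    unfold frob
    apply Real.sqrt_le_sqrt
    exact Finset.single_le_sum (f := fun i => ∑ j, (W i j)^2)
      (fun i _ => by positivity) (Finset.mem_univ i)
  have h4 : (0:ℝ) ≤ Real.sqrt (∑ j, (u j - u' j) ^ 2) := Real.sqrt_nonneg _
  calc |∑ j, W i j * (u j - u' j)|
      ≤ Real.sqrt (∑ j, (W i j) ^ 2) * Real.sqrt (∑ j, (u j - u' j) ^ 2) := by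
        rw [← h2]; exact h1
    _ ≤ 1 * Real.sqrt (∑ j, (u j - u' j) ^ 2) := by
        exact mul_le_mul_of_nonneg_right h3 h4
    _ = ‖u - u'‖ := by rw [one_mul, hnorm]

lemma mhat_le {S : Type} {d K n : ℕ} (hn : 0 < n)
    (G : Set (S → ℝ)) (hGne : G.Nonempty) (hG : ∀ g ∈ G, ∀ x, |g x| ≤ 1)
    (s st sb : Fin n → S) (a : Fin n → Fin K)
    (φ φ' : S → EuclideanSpace ℝ (Fin d)) :
    mhat G s st sb a φ ≤ mhat G s st sb a φ'
      + (2 * K / n) * ∑ j, ‖φ (s j) - φ' (s j)‖ := by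
  have hn' : (0:ℝ) < n := by exact_mod_cast hn
  haveI : Nonempty ↥G := hGne.to_subtype
  haveI : Nonempty {W : Matrix (Fin K) (Fin d) ℝ // frob W ≤ 1} :=
    ⟨⟨0, by simp [frob]⟩⟩
  set ε := (2 * K / n) * ∑ j, ‖φ (s j) - φ' (s j)‖ with hε
  set val : (S → EuclideanSpace ℝ (Fin d)) →
      {W : Matrix (Fin K) (Fin d) ℝ // frob W ≤ 1} → ↥G → ℝ :=
    fun ψ W g => (1 / n : ℝ) * ∑ j,
      ((K : ℝ) * softmax (W.1.mulVec fun k => ψ (s j) k) (a j) * (g : S → ℝ) (st j)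
        - (g : S → ℝ) (sb j)) with hvaldef
  have hmhat : ∀ ψ, mhat G s st sb a ψ = ⨅ W, ⨆ g, val ψ W g := fun ψ => rfl
  -- bound on each value
  have hval_bound : ∀ ψ W g, |val ψ W g| ≤ (K:ℝ) + 1 := by
    intro ψ W g
    have hterm : ∀ j : Fin n,
        |(K : ℝ) * softmax (W.1.mulVec fun k => ψ (s j) k) (a j) * (g : S → ℝ) (st j)
          - (g : S → ℝ) (sb j)| ≤ (K:ℝ) + 1 := by
      intro j
      have h1 := softmax_nonneg (W.1.mulVec fun k => ψ (s j) k) (a j)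
      have h2 := softmax_le_one (W.1.mulVec fun k => ψ (s j) k) (a j)
      have h3 := hG g g.2 (st j)
      have h4 := hG g g.2 (sb j)
      have hK : (0:ℝ) ≤ (K:ℝ) := Nat.cast_nonneg K
      have h5 : |softmax (W.1.mulVec fun k => ψ (s j) k) (a j) * (g : S → ℝ) (st j)| ≤ 1 := by
        rw [abs_mul, abs_of_nonneg h1]
        exact mul_le_one₀ h2 (abs_nonneg _) h3
      calc |(K : ℝ) * softmax (W.1.mulVec fun k => ψ (s j) k) (a j) * (g : S → ℝ) (st j)
          - (g : S → ℝ) (sb j)|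
          = |(K : ℝ) * (softmax (W.1.mulVec fun k => ψ (s j) k) (a j) * (g : S → ℝ) (st j))
            + -((g : S → ℝ) (sb j))| := by rw [sub_eq_add_neg, mul_assoc]
        _ ≤ |(K : ℝ) * (softmax (W.1.mulVec fun k => ψ (s j) k) (a j) * (g : S → ℝ) (st j))|
            + |-((g : S → ℝ) (sb j))| := abs_add_le _ _
        _ ≤ (K:ℝ) + 1 := by
            rw [abs_mul, abs_neg, abs_of_nonneg hK]
            have := mul_le_mul_of_nonneg_left h5 hK
            linarith
    have hsum : |∑ j, ((K : ℝ) * softmax (W.1.mulVec fun k => ψ (s j) k) (a j)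
        * (g : S → ℝ) (st j) - (g : S → ℝ) (sb j))| ≤ n * ((K:ℝ) + 1) := by
      calc |∑ j, ((K : ℝ) * softmax (W.1.mulVec fun k => ψ (s j) k) (a j)
            * (g : S → ℝ) (st j) - (g : S → ℝ) (sb j))|
          ≤ ∑ j : Fin n, |(K : ℝ) * softmax (W.1.mulVec fun k => ψ (s j) k) (a j)
            * (g : S → ℝ) (st j) - (g : S → ℝ) (sb j)| := Finset.abs_sum_le_sum_abs _ _
        _ ≤ ∑ _j : Fin n, ((K:ℝ) + 1) := Finset.sum_le_sum fun j _ => hterm j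
        _ = n * ((K:ℝ) + 1) := by simp [Finset.sum_const]; ring
    have : |val ψ W g| = (1/n : ℝ) * |∑ j, ((K : ℝ) * softmax (W.1.mulVec fun k => ψ (s j) k) (a j)
        * (g : S → ℝ) (st j) - (g : S → ℝ) (sb j))| := by
      rw [hvaldef, abs_mul, abs_of_nonneg (by positivity : (0:ℝ) ≤ 1/(n:ℝ))]
    rw [this]
    rw [div_mul_eq_mul_div, one_mul, div_le_iff₀ hn']
    calc |∑ j, ((K : ℝ) * softmax (W.1.mulVec fun k => ψ (s j) k) (a j)
          * (g : S → ℝ) (st j) - (g : S → ℝ) (sb j))| ≤ n * ((K:ℝ) + 1) := hsum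
      _ = ((K:ℝ) + 1) * n := by ring
  -- difference bound
  have hεnn : 0 ≤ ε := by
    rw [hε]; positivity
  have hdiff : ∀ W g, val φ W g - val φ' W g ≤ ε := by
    intro W g
    have heq : val φ W g - val φ' W g
        = (1 / n : ℝ) * ∑ j, (K : ℝ)
          * (softmax (W.1.mulVec fun k => φ (s j) k) (a j)
            - softmax (W.1.mulVec fun k => φ' (s j) k) (a j)) * (g : S → ℝ) (st j) := by
      rw [hvaldef]
      rw [← mul_sub, ← Finset.sum_sub_distrib]
      congr 1
      refine Finset.sum_congr rfl fun j _ => ?_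
      ring
    have hterm : ∀ j : Fin n, (K : ℝ)
        * (softmax (W.1.mulVec fun k => φ (s j) k) (a j)
          - softmax (W.1.mulVec fun k => φ' (s j) k) (a j)) * (g : S → ℝ) (st j)
        ≤ 2 * (K:ℝ) * ‖φ (s j) - φ' (s j)‖ := by
      intro j
      have hK : (0:ℝ) ≤ (K:ℝ) := Nat.cast_nonneg K
      have hsm : |softmax (W.1.mulVec fun k => φ (s j) k) (a j)
          - softmax (W.1.mulVec fun k => φ' (s j) k) (a j)| ≤ 2 * ‖φ (s j) - φ' (s j)‖ :=
        softmax_abs_sub_le _ _ _ _ (norm_nonneg _)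
          (fun i => mulVec_coord_lip W.1 W.2 _ _ i)
      have h3 := hG g g.2 (st j)
      calc (K : ℝ) * (softmax (W.1.mulVec fun k => φ (s j) k) (a j)
            - softmax (W.1.mulVec fun k => φ' (s j) k) (a j)) * (g : S → ℝ) (st j)
          ≤ |(K : ℝ) * (softmax (W.1.mulVec fun k => φ (s j) k) (a j)
            - softmax (W.1.mulVec fun k => φ' (s j) k) (a j)) * (g : S → ℝ) (st j)| :=
            le_abs_self _
        _ = (K : ℝ) * |softmax (W.1.mulVec fun k => φ (s j) k) (a j)
            - softmax (W.1.mulVec fun k => φ' (s j) k) (a j)| * |(g : S → ℝ) (st j)| := by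
            rw [abs_mul, abs_mul, abs_of_nonneg hK]
        _ ≤ (K : ℝ) * (2 * ‖φ (s j) - φ' (s j)‖) * 1 := by
            apply mul_le_mul (mul_le_mul_of_nonneg_left hsm hK) h3 (abs_nonneg _)
            positivity
        _ = 2 * (K:ℝ) * ‖φ (s j) - φ' (s j)‖ := by ring
    rw [heq, hε]
    have hsum : ∑ j, (K : ℝ) * (softmax (W.1.mulVec fun k => φ (s j) k) (a j)
          - softmax (W.1.mulVec fun k => φ' (s j) k) (a j)) * (g : S → ℝ) (st j)
        ≤ ∑ j, 2 * (K:ℝ) * ‖φ (s j) - φ' (s j)‖ :=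
      Finset.sum_le_sum fun j _ => hterm j
    calc (1 / n : ℝ) * ∑ j, (K : ℝ) * (softmax (W.1.mulVec fun k => φ (s j) k) (a j)
          - softmax (W.1.mulVec fun k => φ' (s j) k) (a j)) * (g : S → ℝ) (st j)
        ≤ (1 / n : ℝ) * ∑ j, 2 * (K:ℝ) * ‖φ (s j) - φ' (s j)‖ := by
          exact mul_le_mul_of_nonneg_left hsum (by positivity)
      _ = (2 * K / n) * ∑ j, ‖φ (s j) - φ' (s j)‖ := by
          rw [Finset.mul_sum, Finset.mul_sum]
          refine Finset.sum_congr rfl fun j _ => ?_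
          ring
  -- sup/inf manipulation
  have hbddA : ∀ ψ W, BddAbove (Set.range (val ψ W)) := by
    intro ψ W
    refine ⟨(K:ℝ) + 1, ?_⟩
    rintro x ⟨g, rfl⟩
    exact (abs_le.1 (hval_bound ψ W g)).2
  have hFlb : ∀ ψ W, -((K:ℝ) + 1) ≤ ⨆ g, val ψ W g := by
    intro ψ W
    obtain ⟨g0⟩ := (inferInstance : Nonempty ↥G)
    exact le_trans (abs_le.1 (hval_bound ψ W g0)).1 (le_ciSup (hbddA ψ W) g0)
  have hbddB : ∀ ψ, BddBelow (Set.range fun W => ⨆ g, val ψ W g) := by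
    intro ψ
    refine ⟨-((K:ℝ) + 1), ?_⟩
    rintro x ⟨W, rfl⟩
    exact hFlb ψ W
  have hstep : ∀ W, mhat G s st sb a φ ≤ (⨆ g, val φ' W g) + ε := by
    intro W
    have h1 : mhat G s st sb a φ ≤ ⨆ g, val φ W g := by
      rw [hmhat]; exact ciInf_le (hbddB φ) W
    have h2 : (⨆ g, val φ W g) ≤ (⨆ g, val φ' W g) + ε := by
      apply ciSup_le
      intro g
      have := hdiff W g
      have := le_ciSup (hbddA φ' W) g
      linarith
    linarith
  have : mhat G s st sb a φ - ε ≤ mhat G s st sb a φ' := by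
    rw [hmhat φ']
    apply le_ciInf
    intro W
    linarith [hstep W]
  linarith

/-- For two representations `φ, φ'`,
`(m̂_x(φ) − m̂_x(φ'))² ≤ (4K²/n) ∑_j ‖φ(s_j) − φ'(s_j)‖²`. -/
theorem stmt_17 (S : Type) (d K n : ℕ) (hn : 0 < n)
    (φ φ' : S → EuclideanSpace ℝ (Fin d))
    (G : Set (S → ℝ)) (hGne : G.Nonempty) (hG : ∀ g ∈ G, ∀ s, |g s| ≤ 1)
    (s st sb : Fin n → S) (a : Fin n → Fin K) :
    (mhat G s st sb a φ - mhat G s st sb a φ') ^ 2 ≤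
      (4 * (K : ℝ) ^ 2 / n) * ∑ j, ‖φ (s j) - φ' (s j)‖ ^ 2 := by
  have hn' : (0:ℝ) < n := by exact_mod_cast hn
  set D := ∑ j, ‖φ (s j) - φ' (s j)‖ with hD
  set Ssq := ∑ j, ‖φ (s j) - φ' (s j)‖ ^ 2 with hSsq
  have hDnn : 0 ≤ D := Finset.sum_nonneg fun j _ => norm_nonneg _
  have hSnn : 0 ≤ Ssq := Finset.sum_nonneg fun j _ => sq_nonneg _
  have h1 := mhat_le hn G hGne hG s st sb a φ φ'
  have h2 := mhat_le hn G hGne hG s st sb a φ' φ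
  have hsymm : ∑ j, ‖φ' (s j) - φ (s j)‖ = D := by
    rw [hD]; exact Finset.sum_congr rfl fun j _ => norm_sub_rev _ _
  rw [hsymm] at h2
  set m := mhat G s st sb a φ
  set m' := mhat G s st sb a φ'
  have hε : (0:ℝ) ≤ 2 * K / n * D := by positivity
  have habs : (m - m') ^ 2 ≤ (2 * K / n * D) ^ 2 := by
    apply sq_le_sq'
    · linarith
    · linarith
  have hcs : D ^ 2 ≤ n * Ssq := by
    have := sq_sum_le_card_mul_sum_sq (s := Finset.univ)
      (f := fun j => ‖φ (s j) - φ' (s j)‖)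
    simpa [hD, hSsq, Finset.card_univ] using this
  have hfinal : (2 * K / n * D) ^ 2 ≤ 4 * (K : ℝ) ^ 2 / n * Ssq := by
    have e1 : (2 * (K:ℝ) / n * D) ^ 2 = 4 * (K:ℝ)^2 * D^2 / n^2 := by
      field_simp; ring
    have e2 : 4 * (K : ℝ) ^ 2 / n * Ssq = 4 * (K:ℝ)^2 * (n * Ssq) / n^2 := by
      field_simp
    rw [e1, e2]
    apply div_le_div_of_nonneg_right ?_ (by positivity)
    nlinarith [sq_nonneg ((K:ℝ))]
  linarith
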